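/- Let p ≥ 1 and let v : ℝ^d → ℝ be a smooth 1-periodic function of zero average on [−1/2,1/2)^d, depending measurably on a random parameter with expectation ⟨·⟩. Then the annealed Poincaré–Wirtinger inequality holds: ∫_{[−1/2,1/2)^d} ⟨|v|^{2p}⟩^{1/(2p)} ≤ C(d) ∫_{[−1/2,1/2)^d} ⟨|∇v|^{2p}⟩^{1/(2p)}. -/

import Mathlib

open MeasureTheory
open scoped ENNReal

noncomputable def latt (d : ℕ) (k : Fin d → ℤ) : EuclideanSpace ℝ (Fin d) :=
  (EuclideanSpace.equiv (Fin d) ℝ).symm (fun j => (k j : ℝ))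

def box (d : ℕ) : Set (EuclideanSpace ℝ (Fin d)) :=
  {x | ∀ i, x i ∈ Set.Ico (-(1/2) : ℝ) (1/2)}

namespace PW

variable {d : ℕ}

lemma latt_apply (k : Fin d → ℤ) (i : Fin d) : latt d k i = (k i : ℝ) := rfl

noncomputable instance instVAdd : VAdd (Fin d → ℤ) (EuclideanSpace ℝ (Fin d)) :=
  ⟨fun k x => latt d k + x⟩

lemma vadd_def (k : Fin d → ℤ) (x : EuclideanSpace ℝ (Fin d)) : k +ᵥ x = latt d k + x := rfl

noncomputable instance instAddAction : AddAction (Fin d → ℤ) (EuclideanSpace ℝ (Fin d)) where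
  zero_vadd x := by
    show latt d 0 + x = x
    apply PiLp.ext; intro i
    simp [latt_apply, PiLp.add_apply]
  add_vadd k l x := by
    show latt d (k + l) + x = latt d k + (latt d l + x)
    apply PiLp.ext; intro i
    simp [latt_apply, PiLp.add_apply]
    push_cast; ring

instance instMeasurableVAdd :
    MeasurableVAdd (Fin d → ℤ) (EuclideanSpace ℝ (Fin d)) where
  measurable_const_vadd k := by
    simpa [vadd_def] using (measurable_id.const_add (latt d k))
  measurable_vadd_const x := measurable_of_countable _

noncomputable instance instVAddInvariant :
    VAddInvariantMeasure (Fin d → ℤ) (EuclideanSpace ℝ (Fin d)) volume :=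
  ⟨fun k s hs => by
    simpa [vadd_def] using measure_preimage_add volume (latt d k) s⟩

/-- shifted cells -/
def cell (c : Fin d → ℝ) : Set (EuclideanSpace ℝ (Fin d)) :=
  {x | ∀ i, x i ∈ Set.Ico (c i) (c i + 1)}

lemma box_eq_cell : box d = cell (fun _ => -(1/2)) := by
  ext x; unfold box cell; norm_num

lemma measurableSet_cell (c : Fin d → ℝ) : MeasurableSet (cell c) := by
  have : cell c = ⋂ i, (fun x : EuclideanSpace ℝ (Fin d) => x i) ⁻¹'
      Set.Ico (c i) (c i + 1) := by
    ext x; simp [cell, Set.mem_iInter]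
  rw [this]
  exact MeasurableSet.iInter fun i =>
    ((EuclideanSpace.proj i).continuous.measurable) measurableSet_Ico

lemma isAddFundamentalDomain_cell (c : Fin d → ℝ) :
    IsAddFundamentalDomain (Fin d → ℤ) (cell c) (volume :
      Measure (EuclideanSpace ℝ (Fin d))) := by
  apply IsAddFundamentalDomain.mk' (measurableSet_cell c).nullMeasurableSet
  intro x
  have h : ∀ i, ∃! m : ℤ, x i + m • (1:ℝ) ∈ Set.Ico (c i) (c i + 1) := fun i =>
    existsUnique_add_zsmul_mem_Ico one_pos (x i) (c i)
  choose m hm hun using h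
  have key : ∀ (k : Fin d → ℤ) i, (k +ᵥ x) i = x i + (k i) • (1:ℝ) := by
    intro k i
    simp [vadd_def, PiLp.add_apply, latt_apply, add_comm, zsmul_eq_mul]
  refine ⟨m, fun i => by rw [key]; exact (hm i :), fun k hk => funext fun i => hun i (k i) ?_⟩
  show x i + (k i) • (1:ℝ) ∈ _
  rw [← key]; exact hk i


lemma image_add_right_box (a : EuclideanSpace ℝ (Fin d)) :
    (fun x => x + a) '' box d = cell (fun i => a i - 1/2) := by
  ext z
  constructor
  · rintro ⟨y, hy, rfl⟩
    intro i
    have := hy i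
    simp only [Set.mem_Ico] at this ⊢
    rw [PiLp.add_apply]
    constructor <;> [linarith [this.1]; linarith [this.2]]
  · intro hz
    refine ⟨z - a, fun i => ?_, sub_add_cancel z a⟩
    have := hz i
    simp only [Set.mem_Ico] at this ⊢
    rw [PiLp.sub_apply]
    constructor <;> [linarith [this.1]; linarith [this.2]]

lemma setLIntegral_shift (f : EuclideanSpace ℝ (Fin d) → ℝ≥0∞)
    (hf : ∀ (k : Fin d → ℤ) x, f (latt d k + x) = f x) (a : EuclideanSpace ℝ (Fin d)) :
    ∫⁻ x in box d, f (x + a) = ∫⁻ x in box d, f x := by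
  rw [(measurePreserving_add_right volume a).setLIntegral_comp_emb
    (measurableEmbedding_addRight a) f (box d), image_add_right_box]
  rw [box_eq_cell]
  exact (isAddFundamentalDomain_cell _).setLIntegral_eq (isAddFundamentalDomain_cell _) f
    (fun g x => hf g x)

lemma setIntegral_shift (f : EuclideanSpace ℝ (Fin d) → ℝ)
    (hf : ∀ (k : Fin d → ℤ) x, f (latt d k + x) = f x) (a : EuclideanSpace ℝ (Fin d)) :
    ∫ x in box d, f (x + a) = ∫ x in box d, f x := by
  rw [← (measurePreserving_add_right volume a).setIntegral_image_emb
    (measurableEmbedding_addRight a) f (box d), image_add_right_box]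
  rw [box_eq_cell]
  exact (isAddFundamentalDomain_cell _).setIntegral_eq (isAddFundamentalDomain_cell _)
    (fun g x => hf g x)

lemma volume_box : (volume (box d)) = 1 := by
  have h := EuclideanSpace.volume_preserving_symm_measurableEquiv_toLp (Fin d)
  have hbox : box d = (MeasurableEquiv.toLp 2 (Fin d → ℝ)).symm ⁻¹'
      (Set.univ.pi fun _ : Fin d => Set.Ico (-(1/2) : ℝ) (1/2)) := by
    ext x; simp [box, Set.mem_pi]
  rw [hbox, h.measure_preimage (MeasurableSet.univ_pi fun _ => measurableSet_Ico).nullMeasurableSet]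
  rw [volume_pi_pi]
  norm_num

lemma iSup_min_nat (x : ℝ≥0∞) : ⨆ n : ℕ, min x (n : ℝ≥0∞) = x := by
  apply le_antisymm (iSup_le fun n => min_le_left _ _)
  rcases eq_or_ne x ⊤ with rfl | hx
  · calc (⊤:ℝ≥0∞) = ⨆ n : ℕ, (n : ℝ≥0∞) := (ENNReal.iSup_natCast).symm
    _ ≤ ⨆ n : ℕ, min ⊤ (n : ℝ≥0∞) := by gcongr with n; simp
  · obtain ⟨n, hn⟩ := ENNReal.exists_nat_gt hx
    exact le_trans (le_of_eq (min_eq_left hn.le).symm) (le_iSup (fun n : ℕ => min x (n:ℝ≥0∞)) n)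

lemma rpow_iSup {ι : Sort*} [Nonempty ι] (f : ι → ℝ≥0∞) {q : ℝ} (hq : 0 < q) :
    (⨆ i, f i) ^ q = ⨆ i, (f i) ^ q := by
  simpa only [ENNReal.orderIsoRpow_apply] using ((ENNReal.orderIsoRpow q hq).map_iSup f)

/-- Core of Minkowski's integral inequality, assuming finiteness of the LHS base. -/
lemma minkowski_core {α β : Type*} [MeasurableSpace α] [MeasurableSpace β]
    (μ : Measure α) (ν : Measure β) [SFinite μ] [SFinite ν]
    {F : α → β → ℝ≥0∞} (hF : Measurable (Function.uncurry F)) {q : ℝ} (hq : 1 < q)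
    (hA : (∫⁻ a, (∫⁻ b, F a b ∂ν) ^ q ∂μ) ≠ ⊤) :
    (∫⁻ a, (∫⁻ b, F a b ∂ν) ^ q ∂μ) ^ (1/q) ≤ ∫⁻ b, (∫⁻ a, (F a b) ^ q ∂μ) ^ (1/q) ∂ν := by
  set I : α → ℝ≥0∞ := fun a => ∫⁻ b, F a b ∂ν with hI
  have hImeas : Measurable I := hF.lintegral_prod_right'
  set A : ℝ≥0∞ := ∫⁻ a, I a ^ q ∂μ with hAdef
  set RHS : ℝ≥0∞ := ∫⁻ b, (∫⁻ a, (F a b) ^ q ∂μ) ^ (1/q) ∂ν with hRHS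
  rcases eq_or_ne A 0 with hA0 | hA0
  · rw [hA0, ENNReal.zero_rpow_of_pos (by positivity)]; exact zero_le
  have hq0 : (0:ℝ) < q := lt_trans one_pos hq
  have hcon := Real.HolderConjugate.conjExponent hq
  set q' : ℝ := q.conjExponent with hq'def
  have hq'0 : (0:ℝ) < q' := hcon.symm.pos
  -- step 1: A = ∫∫ I^{q-1} F
  have hsplit : ∀ x : ℝ≥0∞, x ^ q = x ^ (q-1) * x := fun x => by
    nth_rewrite 1 [show q = (q-1) + 1 by ring]
    rw [ENNReal.rpow_add_of_nonneg _ _ (by linarith) zero_le_one, ENNReal.rpow_one]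
  have step1 : A = ∫⁻ a, ∫⁻ b, I a ^ (q-1) * F a b ∂ν ∂μ := by
    refine lintegral_congr fun a => ?_
    rw [lintegral_const_mul _ (show Measurable (fun b => F a b) from hF.comp measurable_prodMk_left)]
    exact hsplit (I a)
  -- step 2: swap
  have hH : Measurable (fun p : α × β => I p.1 ^ (q-1) * F p.1 p.2) :=
    ((hImeas.comp measurable_fst).pow_const _).mul hF
  have step2 : A = ∫⁻ b, ∫⁻ a, I a ^ (q-1) * F a b ∂μ ∂ν := by
    rw [step1]; exact lintegral_lintegral_swap hH.aemeasurable
  -- step 3: Hölder in a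
  have key : ∀ a, (I a ^ (q-1)) ^ q' = I a ^ q := fun a => by
    rw [← ENNReal.rpow_mul, hcon.sub_one_mul_conj]
  have step3 : ∀ b, (∫⁻ a, I a ^ (q-1) * F a b ∂μ) ≤
      A ^ (1/q') * (∫⁻ a, (F a b) ^ q ∂μ) ^ (1/q) := by
    intro b
    have h := ENNReal.lintegral_mul_le_Lp_mul_Lq μ hcon.symm
      (f := fun a => I a ^ (q-1)) (g := fun a => F a b)
      ((hImeas.pow_const (q-1)).aemeasurable)
      ((show Measurable (fun a => F a b) from hF.comp measurable_prodMk_right).aemeasurable)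
    calc ∫⁻ a, I a ^ (q-1) * F a b ∂μ
        ≤ (∫⁻ a, (I a ^ (q-1)) ^ q' ∂μ) ^ (1/q') * (∫⁻ a, (F a b) ^ q ∂μ) ^ (1/q) := h
      _ = A ^ (1/q') * (∫⁻ a, (F a b) ^ q ∂μ) ^ (1/q) := by
          congr 2
          exact lintegral_congr key
  -- step 4
  have hAq' : A ^ (1/q') ≠ ⊤ := ENNReal.rpow_ne_top_of_nonneg (by positivity) hA
  have step4 : A ≤ A ^ (1/q') * RHS := by
    calc A = ∫⁻ b, ∫⁻ a, I a ^ (q-1) * F a b ∂μ ∂ν := step2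
      _ ≤ ∫⁻ b, A ^ (1/q') * (∫⁻ a, (F a b) ^ q ∂μ) ^ (1/q) ∂ν :=
          lintegral_mono step3
      _ = A ^ (1/q') * RHS := lintegral_const_mul' _ _ hAq'
  -- conclude
  have hAq'0 : A ^ (1/q') ≠ 0 := by
    simp only [ne_eq, ENNReal.rpow_eq_zero_iff, not_or]
    constructor
    · rintro ⟨h, -⟩; exact hA0 h
    · rintro ⟨h, -⟩; exact hA h
  have hmul : A ^ (1/q) * A ^ (1/q') = A := by
    rw [← ENNReal.rpow_add _ _ hA0 hA,
      show 1/q + 1/q' = 1 by rw [one_div, one_div]; exact hcon.inv_add_inv_eq_one,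
      ENNReal.rpow_one]
  have : A ^ (1/q) * A ^ (1/q') ≤ RHS * A ^ (1/q') := by
    rw [hmul]; rw [mul_comm] at step4; exact step4
  exact (ENNReal.mul_le_mul_iff_left hAq'0 hAq').mp this

/-- Minkowski's integral inequality for `ℝ≥0∞`-valued kernels. -/
lemma minkowski_lintegral {α β : Type*} [MeasurableSpace α] [MeasurableSpace β]
    (μ : Measure α) (ν : Measure β) [IsFiniteMeasure μ] [IsFiniteMeasure ν]
    {F : α → β → ℝ≥0∞} (hF : Measurable (Function.uncurry F)) {q : ℝ} (hq : 1 < q) :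
    (∫⁻ a, (∫⁻ b, F a b ∂ν) ^ q ∂μ) ^ (1/q) ≤ ∫⁻ b, (∫⁻ a, (F a b) ^ q ∂μ) ^ (1/q) ∂ν := by
  have hq0 : (0:ℝ) < q := lt_trans one_pos hq
  set Fn : ℕ → α → β → ℝ≥0∞ := fun n a b => min (F a b) n with hFn
  have hFnmeas : ∀ n, Measurable (Function.uncurry (Fn n)) := fun n => hF.min measurable_const
  have hFnmono : ∀ a b, Monotone (fun n => Fn n a b) := fun a b n m h => by
    exact min_le_min le_rfl (by exact_mod_cast Nat.cast_le.mpr h)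
  -- each truncated LHS base is finite
  have hAn : ∀ n, (∫⁻ a, (∫⁻ b, Fn n a b ∂ν) ^ q ∂μ) ≠ ⊤ := by
    intro n
    have hb : ∀ a, (∫⁻ b, Fn n a b ∂ν) ≤ (n : ℝ≥0∞) * ν Set.univ := fun a => by
      calc (∫⁻ b, Fn n a b ∂ν) ≤ ∫⁻ _, (n : ℝ≥0∞) ∂ν := lintegral_mono fun b => min_le_right _ _
        _ = (n : ℝ≥0∞) * ν Set.univ := lintegral_const _
    have : (∫⁻ a, (∫⁻ b, Fn n a b ∂ν) ^ q ∂μ) ≤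
        ((n : ℝ≥0∞) * ν Set.univ) ^ q * μ Set.univ := by
      calc (∫⁻ a, (∫⁻ b, Fn n a b ∂ν) ^ q ∂μ)
          ≤ ∫⁻ _, ((n : ℝ≥0∞) * ν Set.univ) ^ q ∂μ := by
            refine lintegral_mono fun a => ?_
            exact ENNReal.rpow_le_rpow (hb a) hq0.le
        _ = ((n : ℝ≥0∞) * ν Set.univ) ^ q * μ Set.univ := lintegral_const _
    refine ne_top_of_le_ne_top ?_ this
    exact ENNReal.mul_ne_top
      (ENNReal.rpow_ne_top_of_nonneg hq0.le
        (ENNReal.mul_ne_top (ENNReal.natCast_ne_top n) (measure_ne_top ν _)))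
      (measure_ne_top μ _)
  -- truncated Minkowski
  have hstep : ∀ n, (∫⁻ a, (∫⁻ b, Fn n a b ∂ν) ^ q ∂μ) ^ (1/q) ≤
      ∫⁻ b, (∫⁻ a, (F a b) ^ q ∂μ) ^ (1/q) ∂ν := by
    intro n
    refine le_trans (minkowski_core μ ν (hFnmeas n) hq (hAn n)) ?_
    refine lintegral_mono fun b => ?_
    refine ENNReal.rpow_le_rpow (lintegral_mono fun a => ?_) (by positivity)
    exact ENNReal.rpow_le_rpow (min_le_left _ _) hq0.le
  -- pass to the limit
  have hinner : ∀ a, (∫⁻ b, F a b ∂ν) ^ q = ⨆ n, (∫⁻ b, Fn n a b ∂ν) ^ q := by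
    intro a
    rw [show (∫⁻ b, F a b ∂ν) = ⨆ n, ∫⁻ b, Fn n a b ∂ν from ?_, rpow_iSup _ hq0]
    rw [← lintegral_iSup (fun n => show Measurable (fun b => Fn n a b) from (hFnmeas n).comp measurable_prodMk_left)
      (fun n m h => fun b => hFnmono a b h)]
    exact lintegral_congr fun b => (iSup_min_nat _).symm
  have houter : (∫⁻ a, (∫⁻ b, F a b ∂ν) ^ q ∂μ) =
      ⨆ n, ∫⁻ a, (∫⁻ b, Fn n a b ∂ν) ^ q ∂μ := by
    rw [lintegral_congr hinner]
    exact lintegral_iSup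
      (fun n => ((hFnmeas n).lintegral_prod_right').pow_const _)
      (fun n m h => fun a => ENNReal.rpow_le_rpow
        (lintegral_mono fun b => hFnmono a b h) hq0.le)
  rw [houter, rpow_iSup _ (by positivity : (0:ℝ) < 1/q)]
  exact iSup_le hstep

section Analysis

variable {d : ℕ}

local notation "E" => EuclideanSpace ℝ (Fin d)

lemma norm_dual (L : EuclideanSpace ℝ (Fin d) →L[ℝ] ℝ) :
    ‖L‖ = Real.sqrt (∑ i, (L (EuclideanSpace.single i (1:ℝ)))^2) := by
  set w := (InnerProductSpace.toDual ℝ (EuclideanSpace ℝ (Fin d))).symm L with hw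
  have hnorm : ‖L‖ = ‖w‖ := by
    rw [hw, LinearIsometryEquiv.norm_map]
  rw [hnorm, EuclideanSpace.norm_eq]
  congr 1
  refine Finset.sum_congr rfl fun i _ => ?_
  have : L (EuclideanSpace.single i (1:ℝ)) =
      inner ℝ w (EuclideanSpace.single i (1:ℝ)) := by
    rw [hw, InnerProductSpace.toDual_symm_apply]
  rw [this, EuclideanSpace.inner_single_right]
  simp [Real.norm_eq_abs, sq_abs]

lemma measurable_dirderiv
    {Ω : Type} [MeasurableSpace Ω] {v : Ω → EuclideanSpace ℝ (Fin d) → ℝ}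
    (hmeas : Measurable (Function.uncurry v))
    (hsm : ∀ ω, ContDiff ℝ (⊤ : ℕ∞) (v ω)) (u : EuclideanSpace ℝ (Fin d)) :
    Measurable (fun s : Ω × EuclideanSpace ℝ (Fin d) => fderiv ℝ (v s.1) s.2 u) := by
  have hdiff : ∀ ω, Differentiable ℝ (v ω) := fun ω => (hsm ω).differentiable (by simp)
  apply measurable_of_tendsto_metrizable
    (f := fun n (s : Ω × EuclideanSpace ℝ (Fin d)) =>
      (v s.1 (s.2 + ((n:ℝ)+1)⁻¹ • u) - v s.1 s.2) / ((n:ℝ)+1)⁻¹)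
  · intro n
    apply Measurable.div_const
    apply Measurable.sub
    · exact hmeas.comp (measurable_fst.prodMk (measurable_snd.add_const _))
    · exact hmeas.comp (measurable_fst.prodMk measurable_snd)
  · rw [tendsto_pi_nhds]
    intro s
    set g : ℝ → ℝ := fun t => v s.1 (s.2 + t • u) with hg
    have hgd : HasDerivAt g (fderiv ℝ (v s.1) s.2 u) 0 := by
      have hc : HasDerivAt (fun t : ℝ => s.2 + t • u) u 0 := by
        simpa using ((hasDerivAt_id (0:ℝ)).smul_const u).const_add s.2
      have hfd : HasFDerivAt (v s.1) (fderiv ℝ (v s.1) s.2) ((fun t : ℝ => s.2 + t • u) 0) := by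
        simpa using ((hdiff s.1) s.2).hasFDerivAt
      exact hfd.comp_hasDerivAt (0:ℝ) hc
    have hslope := hasDerivAt_iff_tendsto_slope.mp hgd
    have hseq : Filter.Tendsto (fun n : ℕ => ((n:ℝ)+1)⁻¹) Filter.atTop (nhdsWithin 0 {0}ᶜ) := by
      apply tendsto_nhdsWithin_of_tendsto_nhds_of_eventually_within
      · exact tendsto_one_div_add_atTop_nhds_zero_nat.congr (fun n => by rw [one_div])
      · exact Filter.Eventually.of_forall fun n => by
          simp only [Set.mem_compl_iff, Set.mem_singleton_iff]
          positivity
    have := hslope.comp hseq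
    refine this.congr fun n => ?_
    show slope g 0 (((n:ℝ)+1)⁻¹) = _
    rw [slope_def_field, sub_zero]
    simp [hg, zero_smul]

lemma measurable_fderiv_norm
    {Ω : Type} [MeasurableSpace Ω] {v : Ω → EuclideanSpace ℝ (Fin d) → ℝ}
    (hmeas : Measurable (Function.uncurry v))
    (hsm : ∀ ω, ContDiff ℝ (⊤ : ℕ∞) (v ω)) :
    Measurable (fun s : Ω × EuclideanSpace ℝ (Fin d) => ‖fderiv ℝ (v s.1) s.2‖) := by
  have : (fun s : Ω × EuclideanSpace ℝ (Fin d) => ‖fderiv ℝ (v s.1) s.2‖) =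
      fun s => Real.sqrt (∑ i, (fderiv ℝ (v s.1) s.2 (EuclideanSpace.single i (1:ℝ)))^2) := by
    funext s; exact norm_dual _
  rw [this]
  exact (Finset.measurable_sum _ fun i _ =>
    (measurable_dirderiv hmeas hsm _).pow_const 2).sqrt

lemma norm_le_sqrt_of_box {y : EuclideanSpace ℝ (Fin d)} (hy : y ∈ box d) :
    ‖y‖ ≤ Real.sqrt d := by
  rw [EuclideanSpace.norm_eq]
  apply Real.sqrt_le_sqrt
  calc (∑ i, ‖y i‖ ^ 2) ≤ ∑ _i : Fin d, (1:ℝ) := by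
        refine Finset.sum_le_sum fun i _ => ?_
        have h := hy i
        simp only [Set.mem_Ico] at h
        have : ‖y i‖ ≤ 1 := by rw [Real.norm_eq_abs, abs_le]; constructor <;> linarith [h.1, h.2]
        nlinarith [norm_nonneg (y i)]
    _ = (d : ℝ) := by simp

lemma isCompact_closed_box :
    IsCompact {x : EuclideanSpace ℝ (Fin d) | ∀ i, x i ∈ Set.Icc (-(1/2):ℝ) (1/2)} := by
  have h0 : IsCompact (Set.pi Set.univ fun _ : Fin d => Set.Icc (-(1/2):ℝ) (1/2)) :=
    isCompact_univ_pi fun _ => isCompact_Icc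
  have := (PiLp.continuousLinearEquiv 2 ℝ (fun _ : Fin d => ℝ)).toHomeomorph.isCompact_preimage.mpr h0
  convert this using 1
  ext x
  simp only [Set.mem_preimage, Set.mem_univ_pi, Set.mem_setOf_eq]
  exact Iff.rfl

lemma integrableOn_box {f : EuclideanSpace ℝ (Fin d) → ℝ} (hf : Continuous f) :
    IntegrableOn f (box d) volume := by
  refine (hf.continuousOn.integrableOn_compact isCompact_closed_box).mono_set ?_
  intro x hx i
  exact Set.Ico_subset_Icc_self (hx i)

lemma ftc_bound {f : EuclideanSpace ℝ (Fin d) → ℝ} (hf : ContDiff ℝ (⊤:ℕ∞) f)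
    (x y : EuclideanSpace ℝ (Fin d)) :
    |f x - f (x + y)| ≤ ∫ t in (0:ℝ)..1, ‖fderiv ℝ f (x + t • y)‖ * ‖y‖ := by
  have hdiff : Differentiable ℝ f := hf.differentiable (by simp)
  have hder : ∀ t ∈ Set.uIcc (0:ℝ) 1,
      HasDerivAt (fun t : ℝ => f (x + t • y)) (fderiv ℝ f (x + t • y) y) t := by
    intro t _
    have hc : HasDerivAt (fun t : ℝ => x + t • y) y t := by
      simpa using ((hasDerivAt_id t).smul_const y).const_add x
    have hfd : HasFDerivAt f (fderiv ℝ f (x + t • y)) ((fun t : ℝ => x + t • y) t) :=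
      (hdiff (x + t • y)).hasFDerivAt
    exact hfd.comp_hasDerivAt t hc
  have hcontA : Continuous fun t : ℝ => fderiv ℝ f (x + t • y) := by
    apply (hf.continuous_fderiv (by simp)).comp
    continuity
  have hcont : Continuous fun t : ℝ => fderiv ℝ f (x + t • y) y :=
    ((ContinuousLinearMap.apply ℝ ℝ y).continuous).comp hcontA
  have heq := intervalIntegral.integral_eq_sub_of_hasDerivAt hder (hcont.intervalIntegrable 0 1)
  have h1 : |f x - f (x + y)| = ‖∫ t in (0:ℝ)..1, fderiv ℝ f (x + t • y) y∂volume‖ := by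
    rw [heq]
    simp [Real.norm_eq_abs, abs_sub_comm]
  rw [h1]
  refine le_trans (intervalIntegral.norm_integral_le_integral_norm zero_le_one) ?_
  refine intervalIntegral.integral_mono_on zero_le_one
    (hcont.norm.intervalIntegrable 0 1)
    (((hcontA.norm).mul continuous_const).intervalIntegrable 0 1) fun t _ => ?_
  exact (fderiv ℝ f (x + t • y)).le_opNorm y

lemma fderiv_translate {f : EuclideanSpace ℝ (Fin d) → ℝ} (hf : Differentiable ℝ f)
    (c z : EuclideanSpace ℝ (Fin d)) :
    fderiv ℝ (fun w => f (w + c)) z = fderiv ℝ f (z + c) := by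
  have hid : HasFDerivAt (fun w : EuclideanSpace ℝ (Fin d) => w + c)
      (ContinuousLinearMap.id ℝ _) z := (hasFDerivAt_id z).add_const c
  have h := ((hf (z + c)).hasFDerivAt.comp z hid).fderiv
  simpa [Function.comp_def] using h

lemma pointwise_lintegral_bound
    {Ω : Type} [MeasurableSpace Ω] {v : Ω → EuclideanSpace ℝ (Fin d) → ℝ}
    (hsm : ∀ ω, ContDiff ℝ (⊤ : ℕ∞) (v ω))
    (hper : ∀ ω x (k : Fin d → ℤ), v ω (x + latt d k) = v ω x)
    (havg : ∀ ω, (∫ x in box d, v ω x) = 0)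
    (ω : Ω) (x : EuclideanSpace ℝ (Fin d)) :
    ENNReal.ofReal |v ω x| ≤ ENNReal.ofReal (Real.sqrt d) *
      ∫⁻ y in box d, ∫⁻ t in Set.Ioc (0:ℝ) 1,
        ENNReal.ofReal ‖fderiv ℝ (v ω) (x + t • y)‖ ∂volume ∂volume := by
  have hcv : Continuous (v ω) := (hsm ω).continuous
  have hcontA : ∀ y : EuclideanSpace ℝ (Fin d),
      Continuous fun t : ℝ => fderiv ℝ (v ω) (x + t • y) := by
    intro y
    apply ((hsm ω).continuous_fderiv (by simp)).comp
    continuity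
  -- representation
  have hshift : (∫ y in box d, v ω (x + y) ∂volume) = 0 := by
    have h1 : (∫ y in box d, v ω (y + x) ∂volume) = ∫ y in box d, v ω y ∂volume :=
      setIntegral_shift (v ω) (fun k z => by rw [add_comm]; exact hper ω z k) x
    calc (∫ y in box d, v ω (x + y) ∂volume) = ∫ y in box d, v ω (y + x) ∂volume := by
          simp_rw [add_comm x]
      _ = 0 := by rw [h1, havg ω]
  have hrep : v ω x = ∫ y in box d, (v ω x - v ω (x + y)) ∂volume := by
    rw [integral_sub]
    · rw [hshift, sub_zero, setIntegral_const, measureReal_def, volume_box]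
      simp
    · exact integrableOn_const (by rw [volume_box]; exact ENNReal.one_ne_top)
    · exact integrableOn_box (hcv.comp (continuous_const.add continuous_id))
  -- step 2
  have step2 : ENNReal.ofReal |v ω x| ≤
      ∫⁻ y in box d, ENNReal.ofReal |v ω x - v ω (x + y)| ∂volume := by
    have h := norm_integral_le_lintegral_norm (μ := volume.restrict (box d))
      (fun y => v ω x - v ω (x + y))
    calc ENNReal.ofReal |v ω x|
        = ENNReal.ofReal ‖∫ y in box d, (v ω x - v ω (x + y)) ∂volume‖ := by
          rw [← hrep]; rfl
      _ ≤ ENNReal.ofReal ((∫⁻ y in box d,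
            ENNReal.ofReal ‖v ω x - v ω (x + y)‖ ∂volume).toReal) :=
          ENNReal.ofReal_le_ofReal h
      _ ≤ ∫⁻ y in box d, ENNReal.ofReal |v ω x - v ω (x + y)| ∂volume := by
          refine le_trans ENNReal.ofReal_toReal_le (le_of_eq ?_)
          simp [Real.norm_eq_abs]
  -- step 3 : per y bound
  have step3 : ∀ y ∈ box d, ENNReal.ofReal |v ω x - v ω (x + y)| ≤
      (∫⁻ t in Set.Ioc (0:ℝ) 1,
        ENNReal.ofReal ‖fderiv ℝ (v ω) (x + t • y)‖ ∂volume) * ENNReal.ofReal (Real.sqrt d) := by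
    intro y hy
    have hbd : |v ω x - v ω (x + y)| ≤
        ∫ t in (0:ℝ)..1, ‖fderiv ℝ (v ω) (x + t • y)‖ * Real.sqrt d := by
      refine le_trans (ftc_bound (hsm ω) x y) ?_
      refine intervalIntegral.integral_mono_on zero_le_one
        (((hcontA y).norm.mul continuous_const).intervalIntegrable 0 1)
        (((hcontA y).norm.mul continuous_const).intervalIntegrable 0 1) fun t _ => ?_
      exact mul_le_mul_of_nonneg_left (norm_le_sqrt_of_box hy) (norm_nonneg _)
    have hInt : IntegrableOn (fun t : ℝ => ‖fderiv ℝ (v ω) (x + t • y)‖ * Real.sqrt d)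
        (Set.Ioc (0:ℝ) 1) volume :=
      ((hcontA y).norm.mul continuous_const).integrableOn_Ioc
    calc ENNReal.ofReal |v ω x - v ω (x + y)|
        ≤ ENNReal.ofReal (∫ t in (0:ℝ)..1, ‖fderiv ℝ (v ω) (x + t • y)‖ * Real.sqrt d) :=
          ENNReal.ofReal_le_ofReal hbd
      _ = ENNReal.ofReal (∫ t in Set.Ioc (0:ℝ) 1,
            ‖fderiv ℝ (v ω) (x + t • y)‖ * Real.sqrt d ∂volume) := by
          rw [intervalIntegral.integral_of_le zero_le_one]
      _ = ∫⁻ t in Set.Ioc (0:ℝ) 1,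
            ENNReal.ofReal (‖fderiv ℝ (v ω) (x + t • y)‖ * Real.sqrt d) ∂volume := by
          rw [ofReal_integral_eq_lintegral_ofReal hInt]
          exact Filter.Eventually.of_forall fun t =>
            mul_nonneg (norm_nonneg _) (Real.sqrt_nonneg _)
      _ = ∫⁻ t in Set.Ioc (0:ℝ) 1,
            ENNReal.ofReal ‖fderiv ℝ (v ω) (x + t • y)‖ * ENNReal.ofReal (Real.sqrt d)
            ∂volume := by
          refine lintegral_congr fun t => ?_
          rw [ENNReal.ofReal_mul (norm_nonneg _)]
      _ = (∫⁻ t in Set.Ioc (0:ℝ) 1,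
            ENNReal.ofReal ‖fderiv ℝ (v ω) (x + t • y)‖ ∂volume) * ENNReal.ofReal (Real.sqrt d) :=
          lintegral_mul_const' _ _ ENNReal.ofReal_ne_top
  -- combine
  calc ENNReal.ofReal |v ω x|
      ≤ ∫⁻ y in box d, ENNReal.ofReal |v ω x - v ω (x + y)| ∂volume := step2
    _ ≤ ∫⁻ y in box d, (∫⁻ t in Set.Ioc (0:ℝ) 1,
          ENNReal.ofReal ‖fderiv ℝ (v ω) (x + t • y)‖ ∂volume) * ENNReal.ofReal (Real.sqrt d)
          ∂volume := by
        refine lintegral_mono_ae ?_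
        have hmbox : MeasurableSet (box d) := by
          rw [box_eq_cell]; exact measurableSet_cell _
        filter_upwards [ae_restrict_mem hmbox] with y hy
        exact step3 y hy
    _ = (∫⁻ y in box d, ∫⁻ t in Set.Ioc (0:ℝ) 1,
          ENNReal.ofReal ‖fderiv ℝ (v ω) (x + t • y)‖ ∂volume ∂volume) *
          ENNReal.ofReal (Real.sqrt d) :=
        lintegral_mul_const' _ _ ENNReal.ofReal_ne_top
    _ = _ := mul_comm _ _

lemma main_core {Ω : Type} [MeasurableSpace Ω] (μ : Measure Ω) [IsProbabilityMeasure μ]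
    {q : ℝ} (hq1 : 1 < q)
    (Φ : Ω → EuclideanSpace ℝ (Fin d) → ℝ≥0∞)
    (hΦmeas : Measurable (fun s : Ω × EuclideanSpace ℝ (Fin d) => Φ s.1 s.2))
    (W : Ω → EuclideanSpace ℝ (Fin d) → ℝ≥0∞)
    (hbound : ∀ ω x, W ω x ≤ ENNReal.ofReal (Real.sqrt d) *
      ∫⁻ y in box d, ∫⁻ t in Set.Ioc (0:ℝ) 1, Φ ω (x + t • y) ∂volume ∂volume)
    (hΦper : ∀ ω (k : Fin d → ℤ) z, Φ ω (latt d k + z) = Φ ω z) :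
    (∫⁻ x in box d, (∫⁻ ω, W ω x ^ q ∂μ) ^ (1/q)) ≤
      ENNReal.ofReal (Real.sqrt d) *
        ∫⁻ x in box d, (∫⁻ ω, Φ ω x ^ q ∂μ) ^ (1/q) := by
  have hq0 : (0:ℝ) < q := lt_trans one_pos hq1
  set c : ℝ≥0∞ := ENNReal.ofReal (Real.sqrt d) with hc
  set G : EuclideanSpace ℝ (Fin d) → ℝ≥0∞ :=
    fun z => (∫⁻ ω, Φ ω z ^ q ∂μ) ^ (1/q) with hG
  have hGmeas : Measurable G := by
    apply Measurable.pow_const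
    exact Measurable.lintegral_prod_left (f := fun ω z => Φ ω z ^ q) (hΦmeas.pow_const q)
  haveI hf1 : IsFiniteMeasure (volume.restrict (box d)) :=
    ⟨by rw [Measure.restrict_apply_univ, volume_box]; exact ENNReal.one_lt_top⟩
  haveI hf2 : IsFiniteMeasure (volume.restrict (Set.Ioc (0:ℝ) 1)) :=
    ⟨by rw [Measure.restrict_apply_univ, Real.volume_Ioc]; simp⟩
  set ν : Measure (EuclideanSpace ℝ (Fin d) × ℝ) :=
    (volume.restrict (box d)).prod (volume.restrict (Set.Ioc (0:ℝ) 1)) with hν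
  have key : ∀ x, (∫⁻ ω, W ω x ^ q ∂μ) ^ (1/q) ≤
      c * ∫⁻ b, G (x + b.2 • b.1) ∂ν := by
    intro x
    have hFxmeas : Measurable (fun s : Ω × (EuclideanSpace ℝ (Fin d) × ℝ) =>
        Φ s.1 (x + s.2.2 • s.2.1)) :=
      hΦmeas.comp (measurable_fst.prodMk (measurable_const.add
        (measurable_snd.snd.smul measurable_snd.fst)))
    have hsplit : ∀ ω, (∫⁻ b, Φ ω (x + b.2 • b.1) ∂ν) =
        ∫⁻ y in box d, ∫⁻ t in Set.Ioc (0:ℝ) 1, Φ ω (x + t • y) ∂volume ∂volume := by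
      intro ω
      exact lintegral_prod _ ((hFxmeas.comp measurable_prodMk_left).aemeasurable)
    calc (∫⁻ ω, W ω x ^ q ∂μ) ^ (1/q)
        ≤ (∫⁻ ω, (c * ∫⁻ b, Φ ω (x + b.2 • b.1) ∂ν) ^ q ∂μ) ^ (1/q) := by
          apply ENNReal.rpow_le_rpow _ (by positivity)
          refine lintegral_mono fun ω => ENNReal.rpow_le_rpow ?_ hq0.le
          rw [hsplit ω]
          exact hbound ω x
      _ = (c ^ q * ∫⁻ ω, (∫⁻ b, Φ ω (x + b.2 • b.1) ∂ν) ^ q ∂μ) ^ (1/q) := by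
          congr 1
          rw [← lintegral_const_mul' _ _
            (ENNReal.rpow_ne_top_of_nonneg hq0.le ENNReal.ofReal_ne_top)]
          exact lintegral_congr fun ω => ENNReal.mul_rpow_of_nonneg _ _ hq0.le
      _ = c * (∫⁻ ω, (∫⁻ b, Φ ω (x + b.2 • b.1) ∂ν) ^ q ∂μ) ^ (1/q) := by
          rw [ENNReal.mul_rpow_of_nonneg _ _ (by positivity), ← ENNReal.rpow_mul,
            mul_one_div_cancel hq0.ne', ENNReal.rpow_one]
      _ ≤ c * ∫⁻ b, (∫⁻ ω, Φ ω (x + b.2 • b.1) ^ q ∂μ) ^ (1/q) ∂ν := by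
          refine mul_le_mul_right ?_ c
          exact minkowski_lintegral μ ν
            (F := fun ω b => Φ ω (x + b.2 • b.1)) hFxmeas hq1
      _ = c * ∫⁻ b, G (x + b.2 • b.1) ∂ν := rfl
  have hGper : ∀ (k : Fin d → ℤ) z, G (latt d k + z) = G z := by
    intro k z
    simp only [hG]
    congr 1
    exact lintegral_congr fun ω => by rw [hΦper ω k z]
  have hswapmeas : Measurable
      (fun s : EuclideanSpace ℝ (Fin d) × (EuclideanSpace ℝ (Fin d) × ℝ) =>
        G (s.1 + s.2.2 • s.2.1)) :=
    hGmeas.comp (measurable_fst.add (measurable_snd.snd.smul measurable_snd.fst))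
  calc (∫⁻ x in box d, (∫⁻ ω, W ω x ^ q ∂μ) ^ (1/q))
      ≤ ∫⁻ x in box d, c * ∫⁻ b, G (x + b.2 • b.1) ∂ν ∂volume :=
        lintegral_mono fun x => key x
    _ = c * ∫⁻ x in box d, ∫⁻ b, G (x + b.2 • b.1) ∂ν ∂volume :=
        lintegral_const_mul' _ _ ENNReal.ofReal_ne_top
    _ = c * ∫⁻ b, ∫⁻ x in box d, G (x + b.2 • b.1) ∂volume ∂ν := by
        congr 1
        exact lintegral_lintegral_swap hswapmeas.aemeasurable
    _ = c * ∫⁻ b, (∫⁻ x in box d, G x ∂volume) ∂ν := by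
        congr 1
        exact lintegral_congr fun b => setLIntegral_shift G hGper (b.2 • b.1)
    _ = c * ((∫⁻ x in box d, G x ∂volume) * ν Set.univ) := by rw [lintegral_const]
    _ = c * ∫⁻ x in box d, G x ∂volume := by
        rw [hν, ← Set.univ_prod_univ, Measure.prod_prod, Measure.restrict_apply_univ,
          Measure.restrict_apply_univ, volume_box, Real.volume_Ioc]
        norm_num

end Analysis

end PW

theorem stmt_8 (d : ℕ) (hd : 0 < d) (p : ℝ) (hp : 1 ≤ p) :
    ∃ C : ℝ≥0∞, C ≠ ⊤ ∧
      ∀ (Ω : Type) [MeasurableSpace Ω] (μ : Measure Ω), IsProbabilityMeasure μ →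
        ∀ v : Ω → EuclideanSpace ℝ (Fin d) → ℝ,
          Measurable (Function.uncurry v) →
          (∀ ω, ContDiff ℝ (⊤ : ℕ∞) (v ω)) →
          (∀ ω x (k : Fin d → ℤ), v ω (x + latt d k) = v ω x) →
          (∀ ω, (∫ x in box d, v ω x) = 0) →
          (∫⁻ x in box d, (∫⁻ ω, (ENNReal.ofReal |v ω x|) ^ (2 * p) ∂μ) ^ (1 / (2 * p))) ≤
            C * ∫⁻ x in box d,
              (∫⁻ ω, (ENNReal.ofReal ‖fderiv ℝ (v ω) x‖) ^ (2 * p) ∂μ) ^ (1 / (2 * p)) := by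
  classical
  refine ⟨ENNReal.ofReal (Real.sqrt d), ENNReal.ofReal_ne_top, ?_⟩
  intro Ω instΩ μ hprob v hmeas hsm hper havg
  haveI : IsProbabilityMeasure μ := hprob
  have hq1 : 1 < 2 * p := by linarith
  have hΦmeas : Measurable (fun s : Ω × EuclideanSpace ℝ (Fin d) =>
      ENNReal.ofReal ‖fderiv ℝ (v s.1) s.2‖) :=
    (PW.measurable_fderiv_norm hmeas hsm).ennreal_ofReal
  have hdiffω : ∀ ω, Differentiable ℝ (v ω) :=
    fun ω => (hsm ω).differentiable (by simp)
  have hΦper : ∀ ω (k : Fin d → ℤ) z,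
      ENNReal.ofReal ‖fderiv ℝ (v ω) (latt d k + z)‖ =
      ENNReal.ofReal ‖fderiv ℝ (v ω) z‖ := by
    intro ω k z
    have hfd : fderiv ℝ (v ω) z = fderiv ℝ (v ω) (latt d k + z) := by
      conv_lhs => rw [show v ω = fun w => v ω (w + latt d k) from
        funext fun w => (hper ω w k).symm]
      rw [PW.fderiv_translate (hdiffω ω), add_comm]
    rw [hfd]
  exact PW.main_core μ hq1
    (fun ω z => ENNReal.ofReal ‖fderiv ℝ (v ω) z‖) hΦmeas
    (fun ω x => ENNReal.ofReal |v ω x|)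
    (fun ω x => PW.pointwise_lintegral_bound hsm hper havg ω x)
    hΦper
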